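/- Let (.,.): G × G → Z/p^k Z be an alternating bilinear form on G = (Z/p^k Z)^m, and suppose there is a monomorphism φ: G → (Z/p^k Z)^{2g} with (a,b) = (φ(a), φ(b))_{p^k}. Then m + q_1 ≤ 2g, where q_1 is the F_p-dimension of μ({h ∈ G : (h, x) ≡ 0 mod p for all x ∈ G}). -/

import Mathlib

open scoped Matrix

def sympJ (g : ℕ) (R : Type) [CommRing R] : Matrix (Fin (2*g)) (Fin (2*g)) R :=
  fun i j => if (i : ℕ) + (j : ℕ) = 2*g - 1 then (if (i : ℕ) < (j : ℕ) then 1 else -1) else 0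

def symp (g : ℕ) (R : Type) [CommRing R] (x y : Fin (2*g) → R) : R :=
  x ⬝ᵥ (sympJ g R).mulVec y

lemma sympJ_transpose (g : ℕ) (R : Type) [CommRing R] :
    (sympJ g R)ᵀ = - sympJ g R := by
  ext i j
  have hi := i.isLt
  have hj := j.isLt
  simp only [Matrix.transpose_apply, Matrix.neg_apply, sympJ]
  by_cases h : (j : ℕ) + (i : ℕ) = 2*g - 1
  · have h' : (i : ℕ) + (j : ℕ) = 2*g - 1 := by omega
    rw [if_pos h, if_pos h']
    rcases lt_trichotomy (i : ℕ) (j : ℕ) with hlt | heq | hgt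
    · rw [if_neg (by omega), if_pos hlt]
    · omega
    · rw [if_pos hgt, if_neg (by omega), neg_neg]
  · rw [if_neg h, if_neg (by omega), neg_zero]

lemma sympJ_mulVec_eq_zero {g : ℕ} {K : Type} [Field K] {x : Fin (2*g) → K}
    (h : (sympJ g K).mulVec x = 0) : x = 0 := by
  funext j
  have hj := j.isLt
  have hij : 2*g - 1 - (j : ℕ) < 2*g := by omega
  set i : Fin (2*g) := ⟨2*g - 1 - (j : ℕ), hij⟩ with hi
  have hsum : (i : ℕ) + (j : ℕ) = 2*g - 1 := by simp [hi]; omega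
  have h0 : (sympJ g K).mulVec x i = 0 := congrFun h i
  rw [Matrix.mulVec, dotProduct] at h0
  rw [Finset.sum_eq_single j (fun b _ hb => by
      have : (i : ℕ) + (b : ℕ) ≠ 2*g - 1 := fun hc => hb (Fin.ext (by omega))
      simp [sympJ, this]) (fun hb => absurd (Finset.mem_univ j) hb)] at h0
  have hne : sympJ g K i j ≠ 0 := by
    simp only [sympJ, if_pos hsum]
    split_ifs <;> simp
  have := mul_eq_zero.mp h0
  tauto

/-- The `i`-th invariant of an alternating bilinear form `B` on `(ℤ/p^kℤ)^m`: the
`𝔽_p`-dimension of the image under `μ : v ↦ p^{k-1}v` (identified with reduction mod `p`)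
of the set of `h` with `B(h, x) ≡ 0 mod p^i` for all `x`. -/
noncomputable def qinv (p k m : ℕ)
    (B : (Fin m → ZMod (p^k)) →ₗ[ZMod (p^k)] (Fin m → ZMod (p^k)) →ₗ[ZMod (p^k)] ZMod (p^k))
    (i : ℕ) : ℕ :=
  Module.finrank (ZMod p) (Submodule.span (ZMod p)
    (Set.image (fun h : Fin m → ZMod (p^k) => fun j => (((h j).val : ℕ) : ZMod p))
      {h | ∀ x, ∃ c, B h x = (p : ZMod (p^k))^i * c}))

/-- If an alternating bilinear form on `G = (ℤ/p^kℤ)^m` is induced by a monomorphism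
into `(ℤ/p^kℤ)^{2g}` with the standard symplectic form, then `m + q_1 ≤ 2g`. -/
theorem stmt9 (p k g m : ℕ) (hp : p.Prime) (hk : 1 ≤ k) (hg : 1 ≤ g) (hm : 1 ≤ m)
    (B : (Fin m → ZMod (p^k)) →ₗ[ZMod (p^k)] (Fin m → ZMod (p^k)) →ₗ[ZMod (p^k)] ZMod (p^k))
    (hB : ∀ a, B a a = 0)
    (φ : (Fin m → ZMod (p^k)) →ₗ[ZMod (p^k)] (Fin (2*g) → ZMod (p^k)))
    (hφ : Function.Injective φ)
    (hφB : ∀ a b, B a b = symp g (ZMod (p^k)) (φ a) (φ b)) :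
    m + qinv p k m B 1 ≤ 2*g := by
  haveI : Fact p.Prime := ⟨hp⟩
  have hk0 : k ≠ 0 := by omega
  haveI : NeZero (p^k) := ⟨pow_ne_zero k hp.ne_zero⟩
  have hdvd : p ∣ p^k := dvd_pow_self p hk0
  set R : Type := ZMod (p^k) with hRdef
  set K : Type := ZMod p with hKdef
  let r : R →+* K := ZMod.castHom hdvd K
  -- basic facts about r
  have hr_val : ∀ a : R, ((a.val : ℕ) : K) = r a := by
    intro a
    rw [ZMod.castHom_apply, ZMod.natCast_val]
  have hrp : r ((p : ℕ) : R) = 0 := by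
    rw [map_natCast, ZMod.natCast_self]
  have hker : ∀ a : R, r a = 0 ↔ (p : R) ∣ a := by
    intro a
    constructor
    · intro h
      rw [← hr_val, ZMod.natCast_eq_zero_iff] at h
      obtain ⟨t, ht⟩ := h
      refine ⟨(t : ℕ), ?_⟩
      calc a = ((a.val : ℕ) : R) := (ZMod.natCast_rightInverse a).symm
        _ = (p : R) * (t : ℕ) := by rw [ht]; push_cast; ring
    · rintro ⟨c, rfl⟩
      rw [map_mul]
      have : ((p : ℕ) : R) = (p : R) := by push_cast; ring
      rw [← this, hrp, zero_mul]
  have hlift : ∀ a : K, r ((a.val : ℕ) : R) = a := by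
    intro a
    rw [map_natCast]
    exact ZMod.natCast_rightInverse a
  -- the matrix of φ and its reduction ψ
  set M : Matrix (Fin (2*g)) (Fin m) R := LinearMap.toMatrix' φ with hMdef
  have hφM : ∀ x, φ x = M.mulVec x := by
    intro x
    conv_lhs => rw [← Matrix.toLin'_toMatrix' φ]
    rw [Matrix.toLin'_apply]
  set ψ : (Fin m → K) →ₗ[K] (Fin (2*g) → K) := Matrix.mulVecLin (M.map r) with hψdef
  have hcomm : ∀ x : Fin m → R, ψ (fun i => r (x i)) = fun i => r (φ x i) := by
    intro x
    funext i
    simp only [hψdef, Matrix.mulVecLin_apply, Matrix.mulVec, dotProduct,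
      Matrix.map_apply, hφM, ← map_mul, ← map_sum]
  -- p^(k-1) * y = 0 → p ∣ y
  have hpdvd : ∀ y : R, (p : R)^(k-1) * y = 0 → (p : R) ∣ y := by
    intro y hy
    have hy' : ((p^(k-1) * y.val : ℕ) : R) = 0 := by
      rw [Nat.cast_mul, Nat.cast_pow, ZMod.natCast_val, ZMod.cast_id, hy]
    rw [ZMod.natCast_eq_zero_iff] at hy'
    have hpk : p^k = p^(k-1) * p := by rw [← pow_succ]; congr 1; omega
    obtain ⟨a, ha⟩ : ∃ a, ZMod.val y = a := ⟨_, rfl⟩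
    rw [ha, hpk] at hy'
    have hdvd' : p ∣ a :=
      (Nat.mul_dvd_mul_iff_left (pow_pos hp.pos (k-1))).mp hy'
    obtain ⟨t, ht⟩ := hdvd'
    rw [← ha] at ht
    refine ⟨(t : ℕ), ?_⟩
    calc y = ((y.val : ℕ) : R) := (ZMod.natCast_rightInverse y).symm
      _ = (p : R) * (t : ℕ) := by rw [ht, Nat.cast_mul]
  -- ψ is injective
  have hψinj : Function.Injective ψ := by
    rw [injective_iff_map_eq_zero]
    intro v hv
    set x : Fin m → R := fun j => (((v j).val : ℕ) : R) with hxdef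
    have hπx : (fun i => r (x i)) = v := funext fun j => hlift (v j)
    have h1 : (fun i => r (φ x i)) = (0 : Fin (2*g) → K) := by
      rw [← hcomm, hπx, hv]
    have h2 : ∀ i, (p : R) ∣ φ x i := fun i => (hker _).1 (congrFun h1 i)
    have h3 : φ ((p : R)^(k-1) • x) = 0 := by
      rw [map_smul]
      funext i
      obtain ⟨c, hc⟩ := h2 i
      have : (p : R)^(k-1) • φ x i = (p : R)^(k-1) * φ x i := rfl
      show (p : R)^(k-1) • φ x i = 0
      rw [this, hc, ← mul_assoc, ← pow_succ]
      have hkk : k - 1 + 1 = k := by omega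
      rw [hkk]
      have : ((p : ℕ) : R)^k = ((p^k : ℕ) : R) := by push_cast; ring
      rw [this, ZMod.natCast_self, zero_mul]
    have h4 : (p : R)^(k-1) • x = 0 := hφ (by rw [h3, map_zero])
    funext j
    have h5 : (p : R)^(k-1) * x j = 0 := congrFun h4 j
    have h6 : (p : R) ∣ x j := hpdvd _ h5
    have h7 : r (x j) = 0 := (hker _).2 h6
    have := congrFun hπx j
    rw [← this, h7]
    rfl
  -- the mod-p symplectic form
  set F : (Fin (2*g) → K) →ₗ[K] (Fin (2*g) → K) →ₗ[K] K :=
    Matrix.toLinearMap₂' K (sympJ g K) with hFdef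
  have hF : ∀ x y, F x y = x ⬝ᵥ (sympJ g K).mulVec y := fun x y =>
    Matrix.toLinearMap₂'_apply' (sympJ g K) x y
  have hJmap : ∀ i j, r (sympJ g R i j) = sympJ g K i j := by
    intro i j
    simp only [sympJ]
    split_ifs <;> simp
  have hr_symp : ∀ x y : Fin (2*g) → R,
      r (symp g R x y) = F (fun i => r (x i)) (fun i => r (y i)) := by
    intro x y
    rw [hF]
    simp only [symp, dotProduct, Matrix.mulVec, map_sum, map_mul, hJmap]
  -- skew-symmetry of F
  have hFskew : ∀ x y, F x y = - F y x := by
    intro x y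
    rw [hF, hF, Matrix.dotProduct_mulVec, ← Matrix.mulVec_transpose, sympJ_transpose,
      Matrix.neg_mulVec, neg_dotProduct, dotProduct_comm]
  have hFrefl : F.IsRefl := by
    intro x y h
    rw [hFskew, h, neg_zero]
  -- nondegeneracy of F
  have hFnd : LinearMap.BilinForm.Nondegenerate F := by
    refine hFrefl.nondegenerate_iff_separatingLeft.2 ?_
    intro x hx
    have hv : Matrix.vecMul x (sympJ g K) = 0 := by
      funext j
      have := hx (Pi.single j 1)
      rw [hF, Matrix.dotProduct_mulVec, dotProduct_single, mul_one] at this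
      exact this
    have hv2 : (sympJ g K).mulVec x = 0 := by
      rw [← Matrix.vecMul_transpose, sympJ_transpose, Matrix.vecMul_neg, hv, neg_zero]
    exact sympJ_mulVec_eq_zero hv2
  -- the subspace W = range ψ and the span S
  set W : Submodule K (Fin (2*g) → K) := LinearMap.range ψ with hWdef
  have hWrank : Module.finrank K W = m := by
    rw [LinearMap.finrank_range_of_inj hψinj, Module.finrank_pi, Fintype.card_fin]
  set Rset : Set (Fin m → R) := {h | ∀ x, ∃ c, B h x = (p : R)^1 * c} with hRsetdef
  set μ : (Fin m → R) → (Fin m → K) := fun h => fun j => (((h j).val : ℕ) : K) with hμdef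
  have hμr : ∀ h, μ h = fun j => r (h j) := by
    intro h; funext j; exact hr_val _
  set S : Submodule K (Fin m → K) := Submodule.span K (μ '' Rset) with hSdef
  have hq : qinv p k m B 1 = Module.finrank K S := rfl
  have hBskew : ∀ a b, B a b = - B b a := by
    intro a b
    have h := hB (a + b)
    simp only [map_add, LinearMap.add_apply, hB a, hB b, zero_add, add_zero] at h
    linear_combination h
  have hsub : Submodule.map ψ S ≤ LinearMap.BilinForm.orthogonal F W := by
    rw [hSdef, Submodule.map_span, Submodule.span_le]
    rintro _ ⟨_, ⟨h, hh, rfl⟩, rfl⟩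
    rw [SetLike.mem_coe, LinearMap.BilinForm.mem_orthogonal_iff]
    rintro w ⟨v, rfl⟩
    show F (ψ v) (ψ (μ h)) = 0
    set x' : Fin m → R := fun j => (((v j).val : ℕ) : R) with hx'def
    have hπ : (fun i => r (x' i)) = v := funext fun j => hlift (v j)
    rw [← hπ, hμr h, hcomm, hcomm, ← hr_symp, ← hφB]
    obtain ⟨c, hc⟩ := hh x'
    rw [hBskew, hc, pow_one, map_neg, map_mul, hrp, zero_mul, neg_zero]
  have hfin1 : Module.finrank K (Submodule.map ψ S) = Module.finrank K S :=
    (Submodule.equivMapOfInjective ψ hψinj S).finrank_eq.symm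
  have h2 : Module.finrank K (Submodule.map ψ S) ≤
      Module.finrank K (LinearMap.BilinForm.orthogonal F W) :=
    Submodule.finrank_mono hsub
  have h3 : Module.finrank K (LinearMap.BilinForm.orthogonal F W) =
      Module.finrank K (Fin (2*g) → K) - Module.finrank K W :=
    LinearMap.BilinForm.finrank_orthogonal hFnd W
  have h4 : Module.finrank K (Fin (2*g) → K) = 2*g := by
    rw [Module.finrank_pi, Fintype.card_fin]
  have h5 : Module.finrank K W ≤ 2*g := by
    exact le_trans (Submodule.finrank_le W) (le_of_eq h4)
  rw [hq]
  omega
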